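/- For every i ≥ 2 the CCS process a^{≤i} is indecomposable, and for every n ≥ 2 the CCS process p_n is indecomposable. -/

import Mathlib

/-- Observable actions: names and co-names. -/
inductive Obs (Name : Type) : Type where
  | pos : Name → Obs Name
  | neg : Name → Obs Name
  deriving DecidableEq

/-- Complementation of observable actions: `ā̄ = a`. -/
def Obs.bar {Name : Type} : Obs Name → Obs Name
  | .pos a => .neg a
  | .neg a => .pos a

/-- Actions: observable actions plus the silent action τ. -/
inductive Act (Name : Type) : Type where
  | obs : Obs Name → Act Name
  | tau : Act Name
  deriving DecidableEq

/-- CCS processes (closed terms): 0, prefixing, choice, parallel composition. -/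
inductive Proc (Name : Type) : Type where
  | nil : Proc Name
  | pre : Act Name → Proc Name → Proc Name
  | plus : Proc Name → Proc Name → Proc Name
  | par : Proc Name → Proc Name → Proc Name
  deriving DecidableEq

/-- SOS transition relation for CCS processes. -/
inductive PTrans {Name : Type} : Proc Name → Act Name → Proc Name → Prop where
  | pre : ∀ (μ : Act Name) (p : Proc Name), PTrans (.pre μ p) μ p
  | plusL : ∀ {p p' q : Proc Name} {μ : Act Name}, PTrans p μ p' → PTrans (.plus p q) μ p'
  | plusR : ∀ {p q q' : Proc Name} {μ : Act Name}, PTrans q μ q' → PTrans (.plus p q) μ q'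
  | parL : ∀ {p p' q : Proc Name} {μ : Act Name}, PTrans p μ p' → PTrans (.par p q) μ (.par p' q)
  | parR : ∀ {p q q' : Proc Name} {μ : Act Name}, PTrans q μ q' → PTrans (.par p q) μ (.par p q')
  | comm : ∀ {p p' q q' : Proc Name} {α : Obs Name},
      PTrans p (.obs α) p' → PTrans q (.obs α.bar) q' → PTrans (.par p q) .tau (.par p' q')

/-- `→ε`: the reflexive-transitive closure of `→τ`. -/
def EpsTrans {Name : Type} : Proc Name → Proc Name → Prop :=
  Relation.ReflTransGen (fun p q => PTrans p Act.tau q)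

/-- `R` is a branching bisimulation. -/
def IsBranchingBisim {Name : Type} (R : Proc Name → Proc Name → Prop) : Prop :=
  Symmetric R ∧
  ∀ p q, R p q → ∀ μ p', PTrans p μ p' →
    (μ = Act.tau ∧ R p' q) ∨
    ∃ q'' q', EpsTrans q q'' ∧ PTrans q'' μ q' ∧ R p q'' ∧ R p' q'

/-- Branching bisimilarity `~BB` (the largest branching bisimulation). -/
def BB {Name : Type} (p q : Proc Name) : Prop :=
  ∃ R : Proc Name → Proc Name → Prop, IsBranchingBisim R ∧ R p q

/-- Rooted branching bisimilarity `~RBB`. -/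
def RBB {Name : Type} (p q : Proc Name) : Prop :=
  (∀ (μ : Act Name) (p' : Proc Name), PTrans p μ p' → ∃ q', PTrans q μ q' ∧ BB p' q') ∧
  (∀ (μ : Act Name) (q' : Proc Name), PTrans q μ q' → ∃ p', PTrans p μ p' ∧ BB p' q')

/-- The action `a`. -/
def act_a {Name : Type} (a : Name) : Act Name := .obs (.pos a)

/-- `a^i`: `a^0 = 0` and `a^{i+1} = a.a^i`. -/
def apow {Name : Type} (a : Name) : ℕ → Proc Name
  | 0 => .nil
  | i + 1 => .pre (act_a a) (apow a i)

/-- `a^{≤i} = a^1 + a^2 + ⋯ + a^i` (for `i ≥ 1`). -/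
def ale {Name : Type} (a : Name) : ℕ → Proc Name
  | 0 => .nil
  | 1 => apow a 1
  | i + 2 => .plus (ale a (i + 1)) (apow a (i + 2))

/-- `p_n = Σ_{i=2}^n a.a^{≤i}` (for `n ≥ 2`). -/
def pn {Name : Type} (a : Name) : ℕ → Proc Name
  | 0 => .nil
  | 1 => .nil
  | 2 => .pre (act_a a) (ale a 2)
  | n + 3 => .plus (pn a (n + 2)) (.pre (act_a a) (ale a (n + 3)))

/-- A process is indecomposable if it is not branching bisimilar to `0` and
cannot be split (modulo `~BB`) into two parallel components that are both
not branching bisimilar to `0`. -/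
def Indecomposable {Name : Type} (p : Proc Name) : Prop :=
  ¬ BB p Proc.nil ∧
  ∀ p1 p2 : Proc Name, BB p (.par p1 p2) → BB p1 Proc.nil ∨ BB p2 Proc.nil

namespace CCSAux

variable {Name : Type}

/-- weight of an action: observable actions count 1, τ counts 0. -/
def w : Act Name → ℕ
  | .obs _ => 1
  | .tau => 0

/-- weak observable depth. -/
def d : Proc Name → ℕ
  | .nil => 0
  | .pre μ p => w μ + d p
  | .plus p q => max (d p) (d q)
  | .par p q => d p + d q

lemma d_trans {p p' : Proc Name} {μ : Act Name} (h : PTrans p μ p') : w μ + d p' ≤ d p := by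
  induction h with
  | pre μ p => simp [d]
  | plusL h ih => simp only [d]; omega
  | plusR h ih => simp only [d]; omega
  | parL h ih => simp only [d]; omega
  | parR h ih => simp only [d]; omega
  | comm h1 h2 ih1 ih2 => simp only [d, w] at *; omega

lemma d_eps {p p' : Proc Name} (h : EpsTrans p p') : d p' ≤ d p := by
  induction h with
  | refl => exact le_rfl
  | tail _ hstep ih => have := d_trans hstep; simp only [w] at this; omega

lemma exists_obs : ∀ p : Proc Name, 1 ≤ d p →
    ∃ p'' α p', EpsTrans p p'' ∧ PTrans p'' (.obs α) p' ∧ d p'' = d p ∧ d p' + 1 = d p := by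
  intro p
  induction p with
  | nil => intro h; simp [d] at h
  | pre μ q ih =>
    intro h
    match μ with
    | .obs α =>
      exact ⟨.pre (.obs α) q, α, q, Relation.ReflTransGen.refl, .pre _ _, rfl,
        by simp only [d, w]; omega⟩
    | .tau =>
      have hq : 1 ≤ d q := by simpa [d, w] using h
      obtain ⟨p'', α, p', he, ht, h1, h2⟩ := ih hq
      exact ⟨p'', α, p', Relation.ReflTransGen.head (.pre _ _) he, ht,
        by simp [d, w, h1], by simp [d, w]; omega⟩
  | plus q r ihq ihr =>
    intro h
    rcases le_total (d r) (d q) with hle | hle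
    · have hq : 1 ≤ d q := by simp only [d] at h; omega
      obtain ⟨p'', α, p', he, ht, h1, h2⟩ := ihq hq
      rcases Relation.ReflTransGen.cases_head he with heq | ⟨c, hc, hrest⟩
      · subst heq
        exact ⟨_, α, p', Relation.ReflTransGen.refl, .plusL ht,
          rfl, by simp only [d]; omega⟩
      · exact ⟨p'', α, p', Relation.ReflTransGen.head (.plusL hc) hrest, ht,
          by simp only [d]; omega, by simp only [d]; omega⟩
    · have hr : 1 ≤ d r := by simp only [d] at h; omega
      obtain ⟨p'', α, p', he, ht, h1, h2⟩ := ihr hr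
      rcases Relation.ReflTransGen.cases_head he with heq | ⟨c, hc, hrest⟩
      · subst heq
        exact ⟨_, α, p', Relation.ReflTransGen.refl, .plusR ht,
          rfl, by simp only [d]; omega⟩
      · exact ⟨p'', α, p', Relation.ReflTransGen.head (.plusR hc) hrest, ht,
          by simp only [d]; omega, by simp only [d]; omega⟩
  | par q r ihq ihr =>
    intro h
    rcases Nat.lt_or_ge (d q) 1 with hq | hq
    · have hr : 1 ≤ d r := by simp only [d] at h; omega
      obtain ⟨p'', α, p', he, ht, h1, h2⟩ := ihr hr
      exact ⟨.par q p'', α, .par q p',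
        Relation.ReflTransGen.lift (fun x => Proc.par q x) (fun a b (hab : PTrans a Act.tau b) => PTrans.parR hab) _ _ he,
        .parR ht, by simp only [d]; omega, by simp only [d]; omega⟩
    · obtain ⟨p'', α, p', he, ht, h1, h2⟩ := ihq hq
      exact ⟨.par p'' r, α, .par p' r,
        Relation.ReflTransGen.lift (fun x => Proc.par x r) (fun a b (hab : PTrans a Act.tau b) => PTrans.parL hab) _ _ he,
        .parL ht, by simp only [d]; omega, by simp only [d]; omega⟩

lemma bb_symm {p q : Proc Name} : BB p q → BB q p :=
  fun ⟨R, hR, h⟩ => ⟨R, hR, hR.1 h⟩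

lemma eps_match {p q p' : Proc Name} (hbb : BB p q) (he : EpsTrans p p') :
    ∃ q', EpsTrans q q' ∧ BB p' q' := by
  induction he with
  | refl => exact ⟨q, Relation.ReflTransGen.refl, hbb⟩
  | tail _ hstep ih =>
    obtain ⟨q1, hq1, ⟨R, hR, hr⟩⟩ := ih
    rcases hR.2 _ _ hr Act.tau _ hstep with ⟨_, hr'⟩ | ⟨q'', q', he2, ht2, _, hr'⟩
    · exact ⟨q1, hq1, ⟨R, hR, hr'⟩⟩
    · exact ⟨q', hq1.trans (he2.tail ht2), ⟨R, hR, hr'⟩⟩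

lemma bb_d_le : ∀ n : ℕ, ∀ p q : Proc Name, d p ≤ n → BB p q → d p ≤ d q := by
  intro n
  induction n with
  | zero => intro p q h _; omega
  | succ n ih =>
    intro p q hn hbb
    rcases Nat.eq_zero_or_pos (d p) with h0 | h1
    · omega
    · obtain ⟨p'', α, p', he, ht, h1', h2'⟩ := exists_obs p h1
      obtain ⟨qt, hqt, hbb2⟩ := eps_match hbb he
      obtain ⟨R, hR, hr⟩ := hbb2
      rcases hR.2 _ _ hr (.obs α) p' ht with ⟨habs, _⟩ | ⟨q'', q', he2, ht2, _, hr2⟩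
      · exact absurd habs (by simp)
      · have hd1 : d p' ≤ d q' := ih p' q' (by omega) ⟨R, hR, hr2⟩
        have h3 := d_trans ht2
        have h4 := d_eps he2
        have h5 := d_eps hqt
        simp only [w] at h3
        omega

lemma bb_d_eq {p q : Proc Name} (h : BB p q) : d p = d q :=
  le_antisymm (bb_d_le (d p) p q le_rfl h) (bb_d_le (d q) q p le_rfl (bb_symm h))

lemma bb_nil_of_d_eq_zero {p : Proc Name} (h : d p = 0) : BB p .nil := by
  refine ⟨fun x y => (d x = 0 ∧ y = .nil) ∨ (d y = 0 ∧ x = .nil), ⟨?_, ?_⟩, Or.inl ⟨h, rfl⟩⟩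
  · intro x y hxy; tauto
  · rintro x y (⟨hd, rfl⟩ | ⟨hd, rfl⟩) μ x' ht
    · have hw := d_trans ht
      rw [hd] at hw
      have hμ : μ = Act.tau := by
        cases μ with
        | obs o => simp [w] at hw
        | tau => rfl
      subst hμ
      simp only [w] at hw
      exact Or.inl ⟨rfl, Or.inl ⟨by omega, rfl⟩⟩
    · cases ht

lemma d_eq_zero_of_bb_nil {p : Proc Name} (h : BB p .nil) : d p = 0 := by
  have := bb_d_eq h
  simpa [d] using this

lemma trans_par_shape {p q r : Proc Name} {μ : Act Name} (h : PTrans (.par p q) μ r) :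
    ∃ p' q', r = .par p' q' ∧ d p' ≤ d p ∧ d q' ≤ d q := by
  cases h with
  | parL h => exact ⟨_, q, rfl, by have := d_trans h; omega, le_rfl⟩
  | parR h => exact ⟨p, _, rfl, le_rfl, by have := d_trans h; omega⟩
  | comm h1 h2 =>
    exact ⟨_, _, rfl, by have := d_trans h1; omega, by have := d_trans h2; omega⟩

lemma eps_par_shape {p q r : Proc Name} (h : EpsTrans (.par p q) r) :
    ∃ p' q', r = .par p' q' ∧ d p' ≤ d p ∧ d q' ≤ d q := by
  induction h with
  | refl => exact ⟨p, q, rfl, le_rfl, le_rfl⟩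
  | tail _ hstep ih =>
    obtain ⟨p1, q1, rfl, h1, h2⟩ := ih
    obtain ⟨p2, q2, rfl, h3, h4⟩ := trans_par_shape hstep
    exact ⟨p2, q2, rfl, h3.trans h1, h4.trans h2⟩

lemma d_apow (a : Name) : ∀ i, d (apow a i) = i
  | 0 => by simp [apow, d]
  | i + 1 => by
    rw [apow]
    show w (act_a a) + d (apow a i) = i + 1
    rw [d_apow a i]
    show 1 + i = i + 1
    omega

lemma d_ale (a : Name) : ∀ i, d (ale a i) = i
  | 0 => by simp [ale, d]
  | 1 => by rw [ale]; exact d_apow a 1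
  | i + 2 => by
    rw [ale]
    show max (d (ale a (i + 1))) (d (apow a (i + 2))) = i + 2
    rw [d_ale a (i + 1), d_apow a (i + 2)]
    omega

lemma d_pn (a : Name) : ∀ n, 2 ≤ n → d (pn a n) = n + 1
  | 0, h => by omega
  | 1, h => by omega
  | 2, _ => by
    rw [pn]
    show w (act_a a) + d (ale a 2) = 2 + 1
    rw [d_ale a 2]
    rfl
  | n + 3, _ => by
    rw [pn]
    show max (d (pn a (n + 2))) (w (act_a a) + d (ale a (n + 3))) = (n + 3) + 1
    rw [d_pn a (n + 2) (by omega), d_ale a (n + 3)]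
    show max (n + 2 + 1) (1 + (n + 3)) = n + 3 + 1
    omega

lemma ale_trans_nil (a : Name) : ∀ i, 1 ≤ i → PTrans (ale a i) (act_a a) Proc.nil
  | 1, _ => PTrans.pre (act_a a) Proc.nil
  | i + 2, _ => PTrans.plusL (ale_trans_nil a (i + 1) (by omega))

lemma pn_trans_char (a : Name) :
    ∀ n, 2 ≤ n → ∀ {μ : Act Name} {r : Proc Name}, PTrans (pn a n) μ r →
      μ = act_a a ∧ ∃ i, 2 ≤ i ∧ i ≤ n ∧ r = ale a i
  | 0, h => by omega
  | 1, h => by omega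
  | 2, _ => by
    intro ht
    rw [pn] at ht
    cases ht
    exact ⟨rfl, 2, le_rfl, le_rfl, rfl⟩
  | n + 3, _ => by
    intro ht
    rw [pn] at ht
    cases ht with
    | plusL h =>
      obtain ⟨hμ, i, h2, h3, h4⟩ := pn_trans_char a (n + 2) (by omega) h
      exact ⟨hμ, i, h2, by omega, h4⟩
    | plusR h =>
      cases h
      exact ⟨rfl, n + 3, by omega, le_rfl, rfl⟩

lemma eps_pn (a : Name) {n : ℕ} (hn : 2 ≤ n) {q : Proc Name}
    (h : EpsTrans (pn a n) q) : q = pn a n := by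
  rcases Relation.ReflTransGen.cases_head h with rfl | ⟨c, hc, _⟩
  · rfl
  · obtain ⟨hμ, -⟩ := pn_trans_char a n hn hc
    simp [act_a] at hμ

lemma act_a_ne_tau (a : Name) : act_a a ≠ Act.tau := by simp [act_a]

lemma ale_indec (a : Name) : ∀ i, 2 ≤ i → Indecomposable (ale a i) := by
  intro i hi
  constructor
  · intro h
    have := d_eq_zero_of_bb_nil h
    rw [d_ale] at this
    omega
  · intro p1 p2 h
    by_contra hc
    push_neg at hc
    obtain ⟨hc1, hc2⟩ := hc
    have h1 : 1 ≤ d p1 := by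
      rcases Nat.eq_zero_or_pos (d p1) with h0 | h0
      · exact absurd (bb_nil_of_d_eq_zero h0) hc1
      · exact h0
    have h2 : 1 ≤ d p2 := by
      rcases Nat.eq_zero_or_pos (d p2) with h0 | h0
      · exact absurd (bb_nil_of_d_eq_zero h0) hc2
      · exact h0
    have hd : d p1 + d p2 = i := by
      have := bb_d_eq h
      rw [d_ale] at this
      simp only [d] at this
      omega
    obtain ⟨R, hR, hr⟩ := h
    rcases hR.2 _ _ hr (act_a a) Proc.nil (ale_trans_nil a i (by omega)) with
      ⟨habs, _⟩ | ⟨q'', q', heps, ht, hr1, hr2⟩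
    · exact act_a_ne_tau a habs
    · obtain ⟨p1'', p2'', rfl, hle1, hle2⟩ := eps_par_shape heps
      have hdq : d p1'' + d p2'' = i := by
        have := bb_d_eq (⟨R, hR, hr1⟩ : BB (ale a i) (.par p1'' p2''))
        rw [d_ale] at this
        simp only [d] at this
        omega
      have hq' : d q' = 0 := by
        have : BB q' Proc.nil := bb_symm ⟨R, hR, hr2⟩
        exact d_eq_zero_of_bb_nil this
      rw [show act_a a = Act.obs (Obs.pos a) from rfl] at ht
      cases ht with
      | parL h' =>
        simp only [d] at hq'
        omega
      | parR h' =>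
        simp only [d] at hq'
        omega

lemma pn_indec (a : Name) : ∀ n, 2 ≤ n → Indecomposable (pn a n) := by
  intro n hn
  constructor
  · intro h
    have := d_eq_zero_of_bb_nil h
    rw [d_pn a n hn] at this
    omega
  · intro p1 p2 h
    by_contra hc
    push_neg at hc
    obtain ⟨hc1, hc2⟩ := hc
    have h1 : 1 ≤ d p1 := by
      rcases Nat.eq_zero_or_pos (d p1) with h0 | h0
      · exact absurd (bb_nil_of_d_eq_zero h0) hc1
      · exact h0
    have h2 : 1 ≤ d p2 := by
      rcases Nat.eq_zero_or_pos (d p2) with h0 | h0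
      · exact absurd (bb_nil_of_d_eq_zero h0) hc2
      · exact h0
    have hd : d p1 + d p2 = n + 1 := by
      have := bb_d_eq h
      rw [d_pn a n hn] at this
      simp only [d] at this
      omega
    have hbbP : BB (.par p1 p2) (pn a n) := bb_symm h
    -- p1's side: show d p1 = 1
    have key1 : d p1 = 1 := by
      obtain ⟨p'', α, p', he, ht, hde, hde'⟩ := exists_obs p1 h1
      have heps2 : EpsTrans (.par p1 p2) (.par p'' p2) :=
        Relation.ReflTransGen.lift (fun x => Proc.par x p2) (fun a b (hab : PTrans a Act.tau b) => PTrans.parL hab) _ _ he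
      obtain ⟨qt, hqt, hbb2⟩ := eps_match hbbP heps2
      have hqt' : qt = pn a n := eps_pn a hn hqt
      subst hqt'
      obtain ⟨R, hR, hr⟩ := hbb2
      rcases hR.2 _ _ hr (.obs α) (.par p' p2) (PTrans.parL ht) with
        ⟨habs, _⟩ | ⟨q'', q', he2, ht2, _, hr2⟩
      · exact absurd habs (by simp)
      · have hq'' : q'' = pn a n := eps_pn a hn he2
        subst hq''
        obtain ⟨-, i, hi2, hin, rfl⟩ := pn_trans_char a n hn ht2
        have hbbale : BB (ale a i) (.par p' p2) := bb_symm ⟨R, hR, hr2⟩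
        rcases (ale_indec a i hi2).2 p' p2 hbbale with hnil | hnil
        · have := d_eq_zero_of_bb_nil hnil
          omega
        · exact absurd hnil hc2
    -- p2's side: show d p2 = 1
    have key2 : d p2 = 1 := by
      obtain ⟨p'', α, p', he, ht, hde, hde'⟩ := exists_obs p2 h2
      have heps2 : EpsTrans (.par p1 p2) (.par p1 p'') :=
        Relation.ReflTransGen.lift (fun x => Proc.par p1 x) (fun a b (hab : PTrans a Act.tau b) => PTrans.parR hab) _ _ he
      obtain ⟨qt, hqt, hbb2⟩ := eps_match hbbP heps2
      have hqt' : qt = pn a n := eps_pn a hn hqt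
      subst hqt'
      obtain ⟨R, hR, hr⟩ := hbb2
      rcases hR.2 _ _ hr (.obs α) (.par p1 p') (PTrans.parR ht) with
        ⟨habs, _⟩ | ⟨q'', q', he2, ht2, _, hr2⟩
      · exact absurd habs (by simp)
      · have hq'' : q'' = pn a n := eps_pn a hn he2
        subst hq''
        obtain ⟨-, i, hi2, hin, rfl⟩ := pn_trans_char a n hn ht2
        have hbbale : BB (ale a i) (.par p1 p') := bb_symm ⟨R, hR, hr2⟩
        rcases (ale_indec a i hi2).2 p1 p' hbbale with hnil | hnil
        · exact absurd hnil hc1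
        · have := d_eq_zero_of_bb_nil hnil
          omega
    omega

end CCSAux

/-- the processes `a^{≤i}` (for `i ≥ 2`) and `p_n` (for `n ≥ 2`)
are indecomposable. -/
theorem ale_pn_indecomposable {Name : Type} (a : Name) :
    (∀ i : ℕ, 2 ≤ i → Indecomposable (ale a i)) ∧
    (∀ n : ℕ, 2 ≤ n → Indecomposable (pn a n)) := by
  exact ⟨CCSAux.ale_indec a, CCSAux.pn_indec a⟩
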